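/- Let A and B be 2×2 Hermitian matrices with negative determinant representing circles in C∞. If z ∈ C (with a·|z|² + conj(b)·z + b·conj(z) + c = 0 for B = [[a,conj(b)],[b,c]]) lies on circle B and w is the image of z under reflection in circle A (i.e. for A = [[a',conj(b')],[b',c']], w = -(b'·conj(z)+c')/(a'·conj(z)+conj(b')), assuming a'·conj(z)+conj(b') ≠ 0), then w lies on the circle represented by the matrix A·B⁻¹·A. -/

import Mathlib

set_option maxHeartbeats 2000000
set_option maxRecDepth 40000


open Matrix Complex

theorem stmt1 (a c a' c' : ℝ) (b b' : ℂ)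
    (A : Matrix (Fin 2) (Fin 2) ℂ) (B : Matrix (Fin 2) (Fin 2) ℂ)
    (hA : A = !![(a' : ℂ), (starRingEnd ℂ) b'; b', (c' : ℂ)])
    (hB : B = !![(a : ℂ), (starRingEnd ℂ) b; b, (c : ℂ)])
    (hdA : (A.det.re : ℝ) < 0) (hdB : (B.det.re : ℝ) < 0)
    (z w : ℂ)
    (hz : (a : ℂ) * z * (starRingEnd ℂ) z + (starRingEnd ℂ) b * z + b * (starRingEnd ℂ) z + (c : ℂ) = 0)
    (hden : (a' : ℂ) * (starRingEnd ℂ) z + (starRingEnd ℂ) b' ≠ 0)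
    (hw : w = -(b' * (starRingEnd ℂ) z + (c' : ℂ)) / ((a' : ℂ) * (starRingEnd ℂ) z + (starRingEnd ℂ) b')) :
    (A * B⁻¹ * A) 0 0 * w * (starRingEnd ℂ) w + (A * B⁻¹ * A) 0 1 * w +
      (A * B⁻¹ * A) 1 0 * (starRingEnd ℂ) w + (A * B⁻¹ * A) 1 1 = 0 := by
  have hdet : (a : ℂ) * c - (starRingEnd ℂ) b * b ≠ 0 := by
    intro h
    rw [hB, Matrix.det_fin_two_of] at hdB
    simp [h] at hdB
  have hBi : B⁻¹ = ((a : ℂ) * c - (starRingEnd ℂ) b * b)⁻¹ •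
      !![(c : ℂ), -(starRingEnd ℂ) b; -b, (a : ℂ)] := by
    rw [hB, Matrix.inv_def, Ring.inverse_eq_inv', Matrix.adjugate_fin_two_of,
      Matrix.det_fin_two_of]
  have hden' : (a' : ℂ) * z + b' ≠ 0 :=
    fun h => hden (by simpa using congrArg (starRingEnd ℂ) h)
  subst hA
  set b'' := (starRingEnd ℂ) b' with hb''
  set bb := (starRingEnd ℂ) b with hbb
  -- the scalar identity
  have h : ((a' : ℂ) * a' * c - a' * b'' * b - a' * b' * bb + a * b' * b'') * (w * (starRingEnd ℂ) w)
      + ((a' : ℂ) * c * b'' - b'' * b'' * b - a' * c' * bb + a * c' * b'') * w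
      + ((a' : ℂ) * b' * c - a' * c' * b - b' * b' * bb + a * c' * b') * ((starRingEnd ℂ) w)
      + ((b' : ℂ) * b'' * c - c' * b * b'' - c' * b' * bb + a * c' * c') = 0 := by
    have hcw : (starRingEnd ℂ) w = -(b'' * z + (c' : ℂ)) / ((a' : ℂ) * z + b') := by
      rw [hw]
      simp [hb'', hbb, map_div₀, Complex.conj_ofReal]
    rw [hcw, hw]
    field_simp
    linear_combination ((a' : ℂ) * c' - b' * b'')^2 * hz
  rw [hBi]
  simp only [Matrix.mul_apply, Fin.sum_univ_two, Matrix.smul_apply, smul_eq_mul,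
    Matrix.cons_val', Matrix.cons_val_zero, Matrix.cons_val_one, Matrix.head_cons,
    Matrix.empty_val', Matrix.cons_val_fin_one, Matrix.head_fin_const, Matrix.of_apply]
  linear_combination ((a : ℂ) * c - bb * b)⁻¹ * h
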